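/- arXiv:1709.02933 — 3 statements merged into one kernel-verified Lean document; each statement's English description precedes it below -/
import Mathlib

section
/- Let π be the plane in ℝ³ with equation v₁ξ + v₂η + v₃t = c, where (v₁, v₂, v₃) ≠ 0. The line h_{p,q} is contained in π if and only if p lies on the line {x ∈ ℝ² : v₁x₁ + v₂x₂ = v₃} and q lies on the line {x ∈ ℝ² : v₁x₁ + v₂x₂ = c} (interpreting these conditions; in particular if (v₁,v₂) ≠ 0 these are two parallel lines in ℝ²). -/
/-- The set of homotheties `(ξ, η, t)`, acting as `x ↦ t • x + (ξ, η)`, that map `p` to `q`. -/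
def homLine (p q : ℝ × ℝ) : Set (ℝ × ℝ × ℝ) :=
  {w | w.2.2 • p + (w.1, w.2.1) = q}

/-- `h_{p,q}` is contained in the plane `v₁ξ + v₂η + v₃t = c` iff `p` lies on the line
`v₁x₁ + v₂x₂ = v₃` and `q` lies on the line `v₁x₁ + v₂x₂ = c`. -/
theorem stmt_3 (v₁ v₂ v₃ c : ℝ) (hv : (v₁, v₂, v₃) ≠ (0, 0, 0)) (p q : ℝ × ℝ) :
    homLine p q ⊆ {w : ℝ × ℝ × ℝ | v₁ * w.1 + v₂ * w.2.1 + v₃ * w.2.2 = c} ↔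
      (v₁ * p.1 + v₂ * p.2 = v₃ ∧ v₁ * q.1 + v₂ * q.2 = c) := by
  constructor
  · intro h
    have h0 := h (show (q.1, q.2, (0:ℝ)) ∈ homLine p q by
      simp [homLine, Prod.ext_iff])
    have h1 := h (show (q.1 - p.1, q.2 - p.2, (1:ℝ)) ∈ homLine p q by
      simp [homLine, Prod.ext_iff])
    simp only [Set.mem_setOf_eq] at h0 h1
    constructor <;> nlinarith
  · rintro ⟨hp, hq⟩ ⟨ξ, η, t⟩ hw
    simp only [homLine, Set.mem_setOf_eq, Prod.ext_iff, Prod.smul_fst, Prod.smul_snd,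
      Prod.fst_add, Prod.snd_add, smul_eq_mul] at hw
    obtain ⟨h1, h2⟩ := hw
    simp only [Set.mem_setOf_eq]
    linear_combination v₁ * h1 + v₂ * h2 - t * hp + hq
end

section
/- Let S be a finite set of n points in ℝ² such that no line of ℝ² contains more than ν points of S. Then any plane in ℝ³ contains at most ν² of the lines h_{p,q} with p, q ∈ S. -/
/-- If no line of ℝ² contains more than `ν` points of `S`, then any plane in ℝ³ contains
at most `ν²` of the lines `h_{p,q}` with `p, q ∈ S`. -/
theorem stmt_4 (S : Finset (ℝ × ℝ)) (ν : ℕ)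
    (hν : ∀ a b c : ℝ, (a, b) ≠ (0, 0) →
      (S.filter (fun x => a * x.1 + b * x.2 = c)).card ≤ ν)
    (v₁ v₂ v₃ c : ℝ) (hv : (v₁, v₂, v₃) ≠ (0, 0, 0)) :
    Set.ncard {pq : (ℝ × ℝ) × (ℝ × ℝ) | pq.1 ∈ S ∧ pq.2 ∈ S ∧
        homLine pq.1 pq.2 ⊆ {w : ℝ × ℝ × ℝ | v₁ * w.1 + v₂ * w.2.1 + v₃ * w.2.2 = c}} ≤
      ν ^ 2 := by
  classical
  have key : ∀ p q : ℝ × ℝ,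
      homLine p q ⊆ {w : ℝ × ℝ × ℝ | v₁ * w.1 + v₂ * w.2.1 + v₃ * w.2.2 = c} →
      (v₁ * q.1 + v₂ * q.2 = c ∧ v₁ * p.1 + v₂ * p.2 = v₃) := by
    intro p q h
    have mem : ∀ t : ℝ, (q.1 - t * p.1, q.2 - t * p.2, t) ∈ homLine p q := by
      intro t
      simp only [homLine, Set.mem_setOf_eq, Prod.ext_iff, Prod.fst_add, Prod.snd_add,
        Prod.smul_fst, Prod.smul_snd, smul_eq_mul]
      constructor <;> ring
    have h0 := h (mem 0)
    have h1 := h (mem 1)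
    simp only [Set.mem_setOf_eq] at h0 h1
    ring_nf at h0 h1
    constructor <;> linarith
  by_cases h12 : v₁ = 0 ∧ v₂ = 0
  · obtain ⟨h1, h2⟩ := h12
    have hv3 : v₃ ≠ 0 := fun h3 => hv (by simp [h1, h2, h3])
    have hempty : {pq : (ℝ × ℝ) × (ℝ × ℝ) | pq.1 ∈ S ∧ pq.2 ∈ S ∧
        homLine pq.1 pq.2 ⊆ {w : ℝ × ℝ × ℝ | v₁ * w.1 + v₂ * w.2.1 + v₃ * w.2.2 = c}} = ∅ := by
      ext pq
      simp only [Set.mem_setOf_eq, Set.mem_empty_iff_false, iff_false, not_and]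
      intro _ _ hsub
      obtain ⟨hb, ha⟩ := key _ _ hsub
      rw [h1, h2] at ha
      exact hv3 (by linarith)
    rw [hempty]
    simp
  · set A := S.filter (fun x => v₁ * x.1 + v₂ * x.2 = v₃) with hA
    set B := S.filter (fun x => v₁ * x.1 + v₂ * x.2 = c) with hB
    have hne : (v₁, v₂) ≠ (0, 0) := by simpa [Prod.ext_iff] using h12
    have hsub : {pq : (ℝ × ℝ) × (ℝ × ℝ) | pq.1 ∈ S ∧ pq.2 ∈ S ∧
        homLine pq.1 pq.2 ⊆ {w : ℝ × ℝ × ℝ | v₁ * w.1 + v₂ * w.2.1 + v₃ * w.2.2 = c}} ⊆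
        ↑(A ×ˢ B) := by
      rintro ⟨p, q⟩ ⟨hp, hq, hs⟩
      obtain ⟨hb, ha⟩ := key _ _ hs
      simp [hA, hB, Finset.mem_product, hp, hq, ha, hb]
    calc Set.ncard {pq : (ℝ × ℝ) × (ℝ × ℝ) | pq.1 ∈ S ∧ pq.2 ∈ S ∧
            homLine pq.1 pq.2 ⊆ {w : ℝ × ℝ × ℝ | v₁ * w.1 + v₂ * w.2.1 + v₃ * w.2.2 = c}}
          ≤ (A ×ˢ B).card := by
          rw [← Set.ncard_coe_finset]
          exact Set.ncard_le_ncard hsub (A ×ˢ B).finite_toSet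
      _ = A.card * B.card := Finset.card_product _ _
      _ ≤ ν * ν := Nat.mul_le_mul (hν _ _ _ hne) (hν _ _ _ hne)
      _ = ν ^ 2 := (sq ν).symm
end

section
/- Let S be a finite set of points in ℝ³ such that no plane of ℝ³ contains more than μ points of S. Then any hyperplane in ℝ⁴ contains at most μ² of the lines h_{p,q} with p, q ∈ S. -/
/-- The set of homotheties `(ξ, t)` of ℝ³, acting as `x ↦ t • x + ξ`, mapping `p` to `q`. -/
def homLine3 (p q : Fin 3 → ℝ) : Set ((Fin 3 → ℝ) × ℝ) :=
  {w | w.2 • p + w.1 = q}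

/-- If no plane of ℝ³ contains more than `μ` points of `S`, then any hyperplane in ℝ⁴ contains
at most `μ²` of the lines `h_{p,q}` with `p, q ∈ S`. -/
theorem stmt_17 (S : Finset (Fin 3 → ℝ)) (μ : ℕ)
    (hμ : ∀ (w : Fin 3 → ℝ) (c : ℝ), w ≠ 0 →
      (S.filter (fun x => (∑ i, w i * x i) = c)).card ≤ μ)
    (v : Fin 3 → ℝ) (u c : ℝ) (hvu : (v, u) ≠ 0) :
    Set.ncard {pq : (Fin 3 → ℝ) × (Fin 3 → ℝ) | pq.1 ∈ S ∧ pq.2 ∈ S ∧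
        homLine3 pq.1 pq.2 ⊆ {w : (Fin 3 → ℝ) × ℝ | (∑ i, v i * w.1 i) + u * w.2 = c}} ≤
      μ ^ 2 := by
  have key : ∀ pq : (Fin 3 → ℝ) × (Fin 3 → ℝ),
      homLine3 pq.1 pq.2 ⊆ {w : (Fin 3 → ℝ) × ℝ | (∑ i, v i * w.1 i) + u * w.2 = c} →
      (∑ i, v i * pq.1 i) = u ∧ (∑ i, v i * pq.2 i) = c := by
    rintro ⟨p, q⟩ hsub
    have h0 : (∑ i, v i * q i) + u * 0 = c :=
      hsub (show (q, (0:ℝ)) ∈ homLine3 p q by simp [homLine3])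
    have h1 : (∑ i, v i * (q - p) i) + u * 1 = c := by
      refine hsub (show (q - p, (1:ℝ)) ∈ homLine3 p q from ?_)
      simp only [homLine3, Set.mem_setOf_eq, one_smul]
      abel
    simp only [Pi.sub_apply, mul_sub, Finset.sum_sub_distrib, mul_one, mul_zero,
      add_zero] at h0 h1
    constructor <;> linarith
  by_cases hv : v = 0
  · have hu : u ≠ 0 := by
      intro h; exact hvu (by simp [hv, h, Prod.ext_iff])
    have hempty : {pq : (Fin 3 → ℝ) × (Fin 3 → ℝ) | pq.1 ∈ S ∧ pq.2 ∈ S ∧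
        homLine3 pq.1 pq.2 ⊆ {w : (Fin 3 → ℝ) × ℝ | (∑ i, v i * w.1 i) + u * w.2 = c}} = ∅ := by
      ext pq
      simp only [Set.mem_setOf_eq, Set.mem_empty_iff_false, iff_false]
      rintro ⟨-, -, hsub⟩
      obtain ⟨h1, h2⟩ := key pq hsub
      simp [hv] at h1 h2
      exact hu (by linarith)
    rw [hempty]; simp
  · set T := (S.filter (fun p => (∑ i, v i * p i) = u)) ×ˢ
      (S.filter (fun q => (∑ i, v i * q i) = c)) with hT
    have hsub : {pq : (Fin 3 → ℝ) × (Fin 3 → ℝ) | pq.1 ∈ S ∧ pq.2 ∈ S ∧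
        homLine3 pq.1 pq.2 ⊆ {w : (Fin 3 → ℝ) × ℝ | (∑ i, v i * w.1 i) + u * w.2 = c}}
        ⊆ (T : Set _) := by
      rintro pq ⟨h1, h2, h3⟩
      obtain ⟨hp, hq⟩ := key pq h3
      simp [hT, Finset.mem_product, h1, h2, hp, hq]
    calc Set.ncard _ ≤ Set.ncard (T : Set ((Fin 3 → ℝ) × (Fin 3 → ℝ))) :=
          Set.ncard_le_ncard hsub T.finite_toSet
      _ = T.card := Set.ncard_coe_finset T
      _ ≤ μ * μ := by
          rw [hT, Finset.card_product]
          exact Nat.mul_le_mul (hμ v u hv) (hμ v c hv)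
      _ = μ ^ 2 := (sq μ).symm
end
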